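/- Let R be a finite non-duplicating TRS over a finite signature F and A a strongly linear interpretation for F. Then s →_R t implies [s] + WG(A,R) ≥ [t]. -/
import Mathlib


/-- First-order terms over a signature `F` (with arity function `ar`) and variables `V`. -/
inductive Tm (F : Type) (ar : F → ℕ) (V : Type) : Type where
  | var : V → Tm F ar V
  | fn : (f : F) → (Fin (ar f) → Tm F ar V) → Tm F ar V

namespace Tm

variable {F : Type} {ar : F → ℕ} {V : Type}

/-- Number of occurrences of the variable `x` in a term. -/
def count [DecidableEq V] (x : V) : Tm F ar V → ℕ
  | var y => if y = x then 1 else 0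
  | fn _ ts => ∑ i, (ts i).count x

/-- Application of a substitution to a term. -/
def subst (σ : V → Tm F ar V) : Tm F ar V → Tm F ar V
  | var x => σ x
  | fn f ts => fn f fun i => (ts i).subst σ

/-- Evaluation of a term in the strongly linear interpretation determined by the
constants `c : F → ℕ` (each `f` is interpreted as `x₁ + ⋯ + xₙ + c f`), under the
assignment `α` for the variables. -/
def evalSLI (c : F → ℕ) (α : V → ℕ) : Tm F ar V → ℕ
  | var x => α x
  | fn f ts => (∑ i, evalSLI c α (ts i)) + c f

end Tm


namespace Tm

variable {F : Type} {ar : F → ℕ}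

/-- The variables occurring in a term. -/
def vars : Tm F ar ℕ → Finset ℕ
  | var x => {x}
  | fn _ ts => Finset.univ.biUnion fun i => vars (ts i)

lemma mem_vars_of_count {x : ℕ} : ∀ {t : Tm F ar ℕ}, 0 < count x t → x ∈ vars t
  | var y, h => by
      simp only [count] at h
      split_ifs at h with hy
      · simp [vars, hy]
      · omega
  | fn f ts, h => by
      simp only [count] at h
      obtain ⟨i, -, hi⟩ := Finset.exists_lt_of_sum_lt
        (show ∑ i : Fin (ar f), (0:ℕ) < ∑ i, count x (ts i) by simpa using h)
      simp only [vars, Finset.mem_biUnion]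
      exact ⟨i, Finset.mem_univ i, mem_vars_of_count hi⟩

lemma evalSLI_subst (c : F → ℕ) (α : ℕ → ℕ) (σ : ℕ → Tm F ar ℕ) :
    ∀ t : Tm F ar ℕ, evalSLI c α (t.subst σ) = evalSLI c (fun x => evalSLI c α (σ x)) t
  | var x => rfl
  | fn f ts => by
      simp only [subst, evalSLI]
      congr 1
      exact Finset.sum_congr rfl fun i _ => evalSLI_subst c α σ (ts i)

lemma evalSLI_decomp (c : F → ℕ) (β : ℕ → ℕ) (S : Finset ℕ) :
    ∀ t : Tm F ar ℕ, (∀ x, 0 < count x t → x ∈ S) →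
      evalSLI c β t = evalSLI c (fun _ => 0) t + ∑ x ∈ S, count x t * β x
  | var y, h => by
      have hy : y ∈ S := h y (by simp [count])
      simp [evalSLI, count, Finset.sum_ite_eq' S y (fun x => β x), hy]
  | fn f ts, h => by
      simp only [evalSLI, count, Finset.sum_mul]
      rw [Finset.sum_comm]
      have key : ∀ i, evalSLI c β (ts i)
          = evalSLI c (fun _ => 0) (ts i) + ∑ x ∈ S, count x (ts i) * β x := by
        intro i
        refine evalSLI_decomp c β S (ts i) fun x hx => h x ?_
        simp only [count]
        exact Finset.sum_pos' (fun _ _ => Nat.zero_le _) ⟨i, Finset.mem_univ i, hx⟩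
      rw [Finset.sum_congr rfl fun i _ => key i, Finset.sum_add_distrib]
      ring

end Tm

/-- `R` is a term rewrite system: left-hand sides are not variables and every variable
of a right-hand side occurs in the corresponding left-hand side. -/
def IsTRS {F : Type} {ar : F → ℕ} (R : Set (Tm F ar ℕ × Tm F ar ℕ)) : Prop :=
  ∀ p ∈ R, (∀ x : ℕ, p.1 ≠ Tm.var x) ∧
    ∀ x : ℕ, 0 < Tm.count x p.2 → 0 < Tm.count x p.1

/-- The rewrite relation of `R`: the closure of the rules under contexts and
substitutions. -/
inductive Rew {F : Type} {ar : F → ℕ} (R : Set (Tm F ar ℕ × Tm F ar ℕ)) :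
    Tm F ar ℕ → Tm F ar ℕ → Prop
  | rule {l r} (σ : ℕ → Tm F ar ℕ) : (l, r) ∈ R → Rew R (l.subst σ) (r.subst σ)
  | congr {f} {ts : Fin (ar f) → Tm F ar ℕ} (i) {t'} :
      Rew R (ts i) t' → Rew R (.fn f ts) (.fn f (Function.update ts i t'))

/-- **weight gap principle.** For a finite non-duplicating TRS `R` over a
finite signature and a strongly linear interpretation `A` (given by constants `c`),
`s →_R t` implies `[s] + WG(A,R) ≥ [t]`, where
`WG(A,R) = max {[r] ∸ [l] : l → r ∈ R}`. -/
theorem weight_gap {F : Type} [Fintype F] {ar : F → ℕ} (c : F → ℕ)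
    (R : Finset (Tm F ar ℕ × Tm F ar ℕ)) (hTRS : IsTRS (↑R : Set (Tm F ar ℕ × Tm F ar ℕ)))
    (hnondup : ∀ p ∈ R, ∀ x : ℕ, Tm.count x p.2 ≤ Tm.count x p.1)
    {s t : Tm F ar ℕ} (h : Rew (↑R : Set (Tm F ar ℕ × Tm F ar ℕ)) s t) :
    Tm.evalSLI c (fun _ => 0) t ≤
      Tm.evalSLI c (fun _ => 0) s +
        R.sup (fun p => Tm.evalSLI c (fun _ => 0) p.2 - Tm.evalSLI c (fun _ => 0) p.1) := by
  induction h with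
  | @rule l r σ hlr =>
      rw [Tm.evalSLI_subst, Tm.evalSLI_subst]
      set β := fun x => Tm.evalSLI c (fun _ => 0) (σ x) with hβ
      set W := R.sup (fun p => Tm.evalSLI c (fun _ => 0) p.2 - Tm.evalSLI c (fun _ => 0) p.1)
        with hW
      rw [Tm.evalSLI_decomp c β l.vars l (fun x hx => Tm.mem_vars_of_count hx),
        Tm.evalSLI_decomp c β l.vars r
          (fun x hx => Tm.mem_vars_of_count ((hTRS (l, r) hlr).2 x hx))]
      have h1 : Tm.evalSLI c (fun _ => 0) r - Tm.evalSLI c (fun _ => 0) l ≤ W :=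
        Finset.le_sup (f := fun p => Tm.evalSLI c (fun _ => 0) p.2
          - Tm.evalSLI c (fun _ => 0) p.1) hlr
      have h2 : ∑ x ∈ l.vars, Tm.count x r * β x ≤ ∑ x ∈ l.vars, Tm.count x l * β x :=
        Finset.sum_le_sum fun x _ => Nat.mul_le_mul_right _ (hnondup (l, r) hlr x)
      omega
  | @congr f ts i t' hrw ih =>
      simp only [Tm.evalSLI]
      have hupd : ∀ j, Tm.evalSLI c (fun _ => 0) (Function.update ts i t' j)
          = Function.update (fun j => Tm.evalSLI c (fun _ => 0) (ts j))
              i (Tm.evalSLI c (fun _ => 0) t') j := fun j =>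
        (Function.apply_update (fun _ s => Tm.evalSLI c (fun _ => 0) s) ts i t' j)
      rw [Finset.sum_congr rfl fun j _ => hupd j,
        Finset.sum_update_of_mem (Finset.mem_univ i),
        Finset.sum_eq_sum_sdiff_singleton_add (Finset.mem_univ i)
          (fun j => Tm.evalSLI c (fun _ => 0) (ts j))]
      omega
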